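/- Let 𝔸 be a unital real Banach algebra, f ∈ 𝔸 with f² = −r²·1 for some real r > 0, and let E_1,…,E_d ∈ 𝔸 be invertible elements such that for each i there is ε_i ∈ {1,−1} with E_i⁻¹ f E_i = ε_i f. Then for every multi-index l ∈ {0,1}^d the iterated decomposition of exp(−f) takes exactly one of four shapes: exp(−f)_{c^l(→E)} = exp(−f) if l = (0,…,0) and ε_i = 1 for all i; = cos(r)·1 if l = (0,…,0) and ε_i = −1 for some i; = −(sin(r)/r)·f if l ≠ (0,…,0) and ε_i = (−1)^{l_i} for all i; and = 0 if l ≠ (0,…,0) and ε_i ≠ (−1)^{l_i} for some i. -/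

import Mathlib

open scoped Nat
set_option maxHeartbeats 1000000


noncomputable section

variable {𝔸 : Type*}

/-- The commutative (`s = 0`) and anticommutative (`s = 1`) part of `A` with respect to an
invertible element `E`: `A_{c^s(E)} = ½(A + (−1)^s E⁻¹AE)`. -/
def cPart [Ring 𝔸] [Algebra ℝ 𝔸] (E : 𝔸) (s : Fin 2) (A : 𝔸) : 𝔸 :=
  (2 : ℝ)⁻¹ • (A + (-1 : 𝔸) ^ (s : ℕ) * (Ring.inverse E * A * E))

/-- The forward iterated decomposition `A_{c^l(→E)}`, applying the first list entry first. -/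
def cFwd [Ring 𝔸] [Algebra ℝ 𝔸] (L : List (𝔸 × Fin 2)) (A : 𝔸) : 𝔸 :=
  L.foldl (fun acc p => cPart p.1 p.2 acc) A

theorem exp_neg_eq' [NormedRing 𝔸] [NormedAlgebra ℝ 𝔸] [CompleteSpace 𝔸]
    (f : 𝔸) (r : ℝ) (hr : 0 < r) (hf : f ^ 2 = -(r ^ 2) • (1 : 𝔸)) :
    NormedSpace.exp (-f) = Real.cos r • (1 : 𝔸) + (-(Real.sin r / r)) • f := by
  have hrne : r ≠ 0 := hr.ne'
  have heven : ∀ n : ℕ, (-f) ^ (2 * n) = ((-1 : ℝ) ^ n * r ^ (2 * n)) • (1 : 𝔸) := by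
    intro n
    rw [Even.neg_pow ⟨n, by ring⟩, pow_mul, hf, smul_pow, one_pow]
    congr 1
    rw [neg_pow, pow_mul]
  have hodd : ∀ n : ℕ, (-f) ^ (2 * n + 1) = (-((-1 : ℝ) ^ n * r ^ (2 * n))) • f := by
    intro n
    rw [pow_succ, heven n, smul_mul_assoc, one_mul, smul_neg, ← neg_smul]
  have hc : HasSum (fun n : ℕ => (((2 * n)! : ℝ))⁻¹ • (-f) ^ (2 * n))
      (Real.cos r • (1 : 𝔸)) := by
    have h1 := (Real.hasSum_cos r).smul_const (1 : 𝔸)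
    convert h1 using 1
    funext n
    rw [heven n, smul_smul]
    congr 1
    field_simp
  have hs : HasSum (fun n : ℕ => (((2 * n + 1)! : ℝ))⁻¹ • (-f) ^ (2 * n + 1))
      (-((Real.sin r / r) • f)) := by
    have h2 := (((Real.hasSum_sin r).div_const r).smul_const f).neg
    convert h2 using 1
    · rfl
    funext n
    rw [hodd n, ← neg_smul, smul_smul]
    congr 1
    have hfac : ((2 * n + 1)! : ℝ) ≠ 0 := by positivity
    field_simp
    ring
  rw [NormedSpace.exp_eq_tsum (𝕂 := ℝ)]
  exact ((hc.even_add_odd hs).tsum_eq).trans (by rw [neg_smul])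

theorem cPart_combo [Ring 𝔸] [Algebra ℝ 𝔸] (f E : 𝔸) (hE : IsUnit E) (ε : ℝ)
    (hcom : Ring.inverse E * f * E = ε • f) (s : Fin 2) (a b : ℝ) :
    cPart E s (a • (1 : 𝔸) + b • f) =
      ((1 + (-1 : ℝ) ^ (s : ℕ)) / 2 * a) • (1 : 𝔸)
        + ((1 + (-1 : ℝ) ^ (s : ℕ) * ε) / 2 * b) • f := by
  have key : Ring.inverse E * (a • (1 : 𝔸) + b • f) * E = a • (1 : 𝔸) + (ε * b) • f := by
    rw [mul_add, add_mul, mul_smul_comm, mul_smul_comm, smul_mul_assoc, smul_mul_assoc,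
      mul_one, Ring.inverse_mul_cancel _ hE, hcom, smul_smul, mul_comm b ε]
  rw [cPart, key]
  fin_cases s <;> simp only [Fin.val_zero, Fin.val_one, pow_zero, pow_one, one_mul, neg_one_mul,
    neg_add_rev, neg_smul, neg_neg] <;>
  · rw [smul_add, smul_add] <;> try rw [neg_mul]
    module

theorem cFwd_combo [Ring 𝔸] [Algebra ℝ 𝔸] (f : 𝔸) {d : ℕ} (E : Fin d → 𝔸)
    (hE : ∀ i, IsUnit (E i)) (ε : Fin d → ℝ)
    (hcom : ∀ i, Ring.inverse (E i) * f * E i = ε i • f) (l : Fin d → Fin 2) (a b : ℝ) :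
    cFwd (List.ofFn (fun i => (E i, l i))) (a • (1 : 𝔸) + b • f) =
      (a * ∏ i, (1 + (-1 : ℝ) ^ ((l i : ℕ))) / 2) • (1 : 𝔸)
        + (b * ∏ i, (1 + (-1 : ℝ) ^ ((l i : ℕ)) * ε i) / 2) • f := by
  induction d generalizing a b with
  | zero => simp [cFwd]
  | succ n ih =>
    rw [List.ofFn_succ]
    have hstep : cFwd ((E 0, l 0) :: List.ofFn fun i : Fin n => (E i.succ, l i.succ))
        (a • (1 : 𝔸) + b • f) =
        cFwd (List.ofFn fun i : Fin n => (E i.succ, l i.succ))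
          (cPart (E 0) (l 0) (a • (1 : 𝔸) + b • f)) := rfl
    rw [hstep, cPart_combo f (E 0) (hE 0) (ε 0) (hcom 0) (l 0) a b,
      ih (fun i => E i.succ) (fun i => hE i.succ) (fun i => ε i.succ) (fun i => hcom i.succ)
        (fun i => l i.succ)]
    rw [Fin.prod_univ_succ, Fin.prod_univ_succ]
    congr 2 <;> ring


/-- The iterated decomposition of `exp(−f)` with respect to invertible elements `E₁,…,E_d`,
each of which commutes (`ε i = 1`) or anticommutes (`ε i = −1`) with `f`, takes exactly one of
four shapes: `exp(−f)`, `cos(r)·1`, `−(sin(r)/r)·f`, or `0`. -/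
theorem cFwd_exp_four_shapes [NormedRing 𝔸] [NormedAlgebra ℝ 𝔸] [CompleteSpace 𝔸]
    (f : 𝔸) (r : ℝ) (hr : 0 < r) (hf : f ^ 2 = -(r ^ 2) • (1 : 𝔸))
    {d : ℕ} (E : Fin d → 𝔸) (hE : ∀ i, IsUnit (E i))
    (ε : Fin d → ℝ) (hε : ∀ i, ε i = 1 ∨ ε i = -1)
    (hcom : ∀ i, Ring.inverse (E i) * f * E i = ε i • f)
    (l : Fin d → Fin 2) :
    ((l = 0 ∧ ∀ i, ε i = 1) →
      cFwd (List.ofFn (fun i => (E i, l i))) (NormedSpace.exp (-f)) =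
        NormedSpace.exp (-f)) ∧
    ((l = 0 ∧ ∃ i, ε i = -1) →
      cFwd (List.ofFn (fun i => (E i, l i))) (NormedSpace.exp (-f)) =
        Real.cos r • (1 : 𝔸)) ∧
    ((l ≠ 0 ∧ ∀ i, ε i = (-1 : ℝ) ^ ((l i : ℕ))) →
      cFwd (List.ofFn (fun i => (E i, l i))) (NormedSpace.exp (-f)) =
        -((Real.sin r / r) • f)) ∧
    ((l ≠ 0 ∧ ∃ i, ε i ≠ (-1 : ℝ) ^ ((l i : ℕ))) →
      cFwd (List.ofFn (fun i => (E i, l i))) (NormedSpace.exp (-f)) = 0) := by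
  have hexp := exp_neg_eq' f r hr hf
  have hmain := cFwd_combo f E hE ε hcom l (Real.cos r) (-(Real.sin r / r))
  rw [hexp]
  have hone : ∀ s : Fin 2, s ≠ 0 → s = 1 := by decide
  refine ⟨?_, ?_, ?_, ?_⟩
  · rintro ⟨hl, hεa⟩
    have hl' : ∀ i, l i = 0 := fun i => congrFun hl i
    rw [hmain]
    have p1 : (∏ i, (1 + (-1 : ℝ) ^ ((l i : ℕ))) / 2) = 1 :=
      Finset.prod_eq_one fun i _ => by rw [hl' i]; norm_num
    have p2 : (∏ i, (1 + (-1 : ℝ) ^ ((l i : ℕ)) * ε i) / 2) = 1 :=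
      Finset.prod_eq_one fun i _ => by rw [hl' i, hεa i]; norm_num
    rw [p1, p2, mul_one, mul_one]
  · rintro ⟨hl, i, hi⟩
    have hl' : ∀ i, l i = 0 := fun i => congrFun hl i
    rw [hmain]
    have p1 : (∏ i, (1 + (-1 : ℝ) ^ ((l i : ℕ))) / 2) = 1 :=
      Finset.prod_eq_one fun i _ => by rw [hl' i]; norm_num
    have p2 : (∏ j, (1 + (-1 : ℝ) ^ ((l j : ℕ)) * ε j) / 2) = 0 :=
      Finset.prod_eq_zero (Finset.mem_univ i) (by rw [hl' i, hi]; norm_num)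
    rw [p1, p2, mul_one, mul_zero, zero_smul, add_zero]
  · rintro ⟨hl, hεa⟩
    obtain ⟨i, hi⟩ := Function.ne_iff.mp hl
    rw [hmain]
    have p1 : (∏ j, (1 + (-1 : ℝ) ^ ((l j : ℕ))) / 2) = 0 :=
      Finset.prod_eq_zero (Finset.mem_univ i) (by rw [hone _ hi]; norm_num)
    have p2 : (∏ j, (1 + (-1 : ℝ) ^ ((l j : ℕ)) * ε j) / 2) = 1 :=
      Finset.prod_eq_one fun j _ => by
        rw [hεa j, ← pow_add, Even.neg_one_pow ⟨(l j : ℕ), rfl⟩]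
        norm_num
    rw [p1, p2, mul_zero, mul_one, zero_smul, zero_add, neg_smul]
  · rintro ⟨hl, i, hi⟩
    obtain ⟨j, hj⟩ := Function.ne_iff.mp hl
    rw [hmain]
    have p1 : (∏ k, (1 + (-1 : ℝ) ^ ((l k : ℕ))) / 2) = 0 :=
      Finset.prod_eq_zero (Finset.mem_univ j) (by rw [hone _ hj]; norm_num)
    have p2 : (∏ k, (1 + (-1 : ℝ) ^ ((l k : ℕ)) * ε k) / 2) = 0 :=
      Finset.prod_eq_zero (Finset.mem_univ i) (by
        rcases eq_or_ne (l i) 0 with h0 | h0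
        · have hv : ε i = -1 := (hε i).resolve_left (by rw [h0] at hi; simpa using hi)
          rw [h0, hv]; norm_num
        · have h1 := hone _ h0
          have hv : ε i = 1 := (hε i).resolve_right (by rw [h1] at hi; simpa using hi)
          rw [h1, hv]; norm_num)
    rw [p1, p2, mul_zero, mul_zero, zero_smul, zero_smul, add_zero]
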